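/- Any achievable rate pair satisfies, for every private receiver p, every superset-saturated Λ ⊆ 2^{I₁}, and every ε > 0: R₂ ≤ (1/n)·H(Xⁿ_Λ | W₁) + Σ_{S∈Λᶜ} |E_{S,p}| + ε. -/

import Mathlib

/-- Shannon entropy (in nats) of a finite-valued random variable on a finite probability
space with mass function `pr`. -/
noncomputable def ent {Ω β : Type*} [Fintype Ω] [Fintype β] [DecidableEq β]
    (pr : Ω → ℝ) (f : Ω → β) : ℝ :=
  ∑ b : β, Real.negMulLog (∑ ω ∈ Finset.univ.filter fun ω => f ω = b, pr ω)

/-- A superset-saturated family of subsets of the public receiver index set. -/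
def Saturated {m : ℕ} (Λ : Finset (Finset (Fin m))) : Prop :=
  ∀ S ∈ Λ, ∀ T : Finset (Fin m), S ⊆ T → T ∈ Λ

open Finset Real

section AuxLemmas

variable {Ω β γ : Type*} [Fintype Ω] [Fintype β] [Fintype γ] [DecidableEq β] [DecidableEq γ]

/-- `negMulLog` is subadditive over finite sums of nonnegative reals. -/
lemma aux_negMulLog_sum_le {ι : Type*} (t : Finset ι) (x : ι → ℝ) (hx : ∀ i ∈ t, 0 ≤ x i) :
    Real.negMulLog (∑ i ∈ t, x i) ≤ ∑ i ∈ t, Real.negMulLog (x i) := by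
  have hS : ∀ i ∈ t, x i ≤ ∑ j ∈ t, x j := fun i hi => Finset.single_le_sum hx hi
  have h : Real.negMulLog (∑ i ∈ t, x i)
      = ∑ i ∈ t, -(x i * Real.log (∑ j ∈ t, x j)) := by
    rw [Real.negMulLog, neg_mul, Finset.sum_mul, ← Finset.sum_neg_distrib]
  rw [h]
  refine Finset.sum_le_sum fun i hi => ?_
  rcases eq_or_lt_of_le (hx i hi) with h0 | h0
  · simp [← h0]
  · rw [Real.negMulLog, neg_mul, neg_le_neg_iff]
    exact mul_le_mul_of_nonneg_left (Real.log_le_log h0 (hS i hi)) (hx i hi)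

/-- Data processing: applying a function cannot increase entropy. -/
lemma aux_ent_comp_le (pr : Ω → ℝ) (hpr0 : ∀ ω, 0 ≤ pr ω) (f : Ω → β) (k : β → γ)
    (g : Ω → γ) (hg : ∀ ω, g ω = k (f ω)) : ent pr g ≤ ent pr f := by
  classical
  have hmass : ∀ c : γ, (∑ ω ∈ Finset.univ.filter fun ω => g ω = c, pr ω)
      = ∑ b ∈ Finset.univ.filter (fun b => k b = c),
          ∑ ω ∈ Finset.univ.filter (fun ω => f ω = b), pr ω := by
    intro c
    rw [← Finset.sum_fiberwise_of_maps_to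
      (g := f) (t := Finset.univ.filter fun b => k b = c)
      (fun x hx => by
        simp only [Finset.mem_filter, Finset.mem_univ, true_and] at hx ⊢
        rw [← hg]; exact hx) pr]
    refine Finset.sum_congr rfl fun b hb => ?_
    simp only [Finset.mem_filter, Finset.mem_univ, true_and] at hb
    refine Finset.sum_congr ?_ fun _ _ => rfl
    ext ω
    simp only [Finset.mem_filter, Finset.mem_univ, true_and, hg]
    constructor
    · rintro ⟨_, h2⟩; exact h2
    · intro h2; exact ⟨by rw [h2, hb], h2⟩
  calc ent pr g = ∑ c : γ, Real.negMulLog (∑ b ∈ Finset.univ.filter (fun b => k b = c),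
          ∑ ω ∈ Finset.univ.filter (fun ω => f ω = b), pr ω) := by
        unfold ent; exact Finset.sum_congr rfl fun c _ => by rw [hmass c]
    _ ≤ ∑ c : γ, ∑ b ∈ Finset.univ.filter (fun b => k b = c),
          Real.negMulLog (∑ ω ∈ Finset.univ.filter (fun ω => f ω = b), pr ω) := by
        refine Finset.sum_le_sum fun c _ => aux_negMulLog_sum_le _ _ fun b _ =>
          Finset.sum_nonneg fun ω _ => hpr0 ω
    _ = ent pr f := by
        unfold ent
        exact Finset.sum_fiberwise_of_maps_to (fun b _ => Finset.mem_univ (k b)) _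

/-- Maximum entropy of a distribution on a finite alphabet. -/
lemma aux_max_ent (r : γ → ℝ) (h0 : ∀ b, 0 ≤ r b) (h1 : ∑ b, r b = 1) :
    ∑ b : γ, Real.negMulLog (r b) ≤ Real.log (Fintype.card γ) := by
  classical
  set t : Finset γ := Finset.univ.filter fun b => 0 < r b with ht
  have hzero : ∀ b ∈ Finset.univ, b ∉ t → Real.negMulLog (r b) = 0 := by
    intro b _ hb
    simp only [ht, Finset.mem_filter, Finset.mem_univ, true_and, not_lt] at hb
    have : r b = 0 := le_antisymm hb (h0 b)
    simp [this]
  have hzero' : ∀ b ∈ Finset.univ, b ∉ t → r b = 0 := by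
    intro b _ hb
    simp only [ht, Finset.mem_filter, Finset.mem_univ, true_and, not_lt] at hb
    exact le_antisymm hb (h0 b)
  have hsum_t : ∑ b ∈ t, r b = 1 := by
    rw [← h1]; exact Finset.sum_subset (Finset.subset_univ t) hzero'
  have hent_t : ∑ b : γ, Real.negMulLog (r b) = ∑ b ∈ t, Real.negMulLog (r b) :=
    (Finset.sum_subset (Finset.subset_univ t) hzero).symm
  have hpos : ∀ b ∈ t, 0 < r b := fun b hb => by
    simpa [ht, Finset.mem_filter] using hb
  have htne : t.Nonempty := by
    by_contra h
    rw [Finset.not_nonempty_iff_eq_empty] at h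
    rw [h, Finset.sum_empty] at hsum_t
    norm_num at hsum_t
  have jensen := strictConcaveOn_log_Ioi.concaveOn.le_map_sum
    (t := t) (w := r) (p := fun b => (r b)⁻¹)
    (fun b hb => (hpos b hb).le) hsum_t
    (fun b hb => Set.mem_Ioi.mpr (inv_pos.mpr (hpos b hb)))
  have hL : ∑ b ∈ t, r b • Real.log (r b)⁻¹ = ∑ b ∈ t, Real.negMulLog (r b) := by
    refine Finset.sum_congr rfl fun b hb => ?_
    rw [smul_eq_mul, Real.log_inv, Real.negMulLog]; ring
  have hR : ∑ b ∈ t, r b • (r b)⁻¹ = (t.card : ℝ) := by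
    rw [Finset.sum_congr rfl fun b hb => by
      rw [smul_eq_mul, mul_inv_cancel₀ (hpos b hb).ne']]
    simp
  rw [hL, hR] at jensen
  rw [hent_t]
  refine jensen.trans ?_
  have hcard : (t.card : ℝ) ≤ (Fintype.card γ : ℝ) := by
    exact_mod_cast (Finset.card_filter_le _ _).trans (le_of_eq Finset.card_univ)
  exact Real.log_le_log (by exact_mod_cast htne.card_pos) hcard

lemma decEq_subsingleton {α : Type*} : Subsingleton (DecidableEq α) :=
  ⟨fun _ _ => funext fun _ => funext fun _ => Subsingleton.elim _ _⟩

/-- Joint entropy is at most entropy of one component plus log-cardinality of the other. -/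
lemma aux_ent_pair_le [instF : Fintype (β × γ)] [instD : DecidableEq (β × γ)]
    (pr : Ω → ℝ) (hpr0 : ∀ ω, 0 ≤ pr ω) (hpr1 : ∑ ω, pr ω = 1)
    (f : Ω → β) (g : Ω → γ) :
    @ent Ω (β × γ) _ instF instD pr (fun ω => (f ω, g ω))
      ≤ ent pr f + Real.log (Fintype.card γ) := by
  obtain rfl := @Subsingleton.elim _ decEq_subsingleton instD (instDecidableEqProd)
  obtain rfl := Subsingleton.elim instF (instFintypeProd β γ)
  classical
  set Q : β → γ → ℝ := fun a b =>
    ∑ ω ∈ Finset.univ.filter (fun ω => (f ω, g ω) = (a, b)), pr ω with hQ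
  set P : β → ℝ := fun a => ∑ ω ∈ Finset.univ.filter (fun ω => f ω = a), pr ω with hP
  have hQ0 : ∀ a b, 0 ≤ Q a b := fun a b => Finset.sum_nonneg fun ω _ => hpr0 ω
  have hP0 : ∀ a, 0 ≤ P a := fun a => Finset.sum_nonneg fun ω _ => hpr0 ω
  have hPQ : ∀ a, P a = ∑ b : γ, Q a b := by
    intro a
    show (∑ ω ∈ Finset.univ.filter (fun ω => f ω = a), pr ω)
        = ∑ b : γ, ∑ ω ∈ Finset.univ.filter (fun ω => (f ω, g ω) = (a, b)), pr ω
    rw [← Finset.sum_fiberwise_of_maps_to (g := g) (t := (Finset.univ : Finset γ))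
      (s := Finset.univ.filter fun ω => f ω = a) (fun x _ => Finset.mem_univ (g x)) pr]
    refine Finset.sum_congr rfl fun b _ => ?_
    refine Finset.sum_congr ?_ fun _ _ => rfl
    ext ω
    simp [Finset.filter_filter, Prod.ext_iff]
  have hPsum : ∑ a : β, P a = 1 := by
    rw [hP, Finset.sum_fiberwise_of_maps_to (fun x _ => Finset.mem_univ (f x)) pr, hpr1]
  have key : ∀ a : β, ∑ b : γ, Real.negMulLog (Q a b)
      ≤ Real.negMulLog (P a) + P a * Real.log (Fintype.card γ) := by
    intro a
    rcases eq_or_lt_of_le (hP0 a) with h0 | h0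
    · have hQz : ∀ b : γ, Q a b = 0 := by
        have := (Finset.sum_eq_zero_iff_of_nonneg
          (fun b _ => hQ0 a b)).mp (by rw [← hPQ a, ← h0])
        exact fun b => this b (Finset.mem_univ b)
      simp [hQz, ← h0]
    · set r : γ → ℝ := fun b => Q a b / P a with hr
      have hr0 : ∀ b, 0 ≤ r b := fun b => div_nonneg (hQ0 a b) (hP0 a)
      have hr1 : ∑ b : γ, r b = 1 := by
        rw [hr]
        simp only [← Finset.sum_div, ← hPQ a]
        exact div_self h0.ne'
      have hQr : ∀ b, Q a b = P a * r b := fun b => by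
        rw [hr]; field_simp
      calc ∑ b : γ, Real.negMulLog (Q a b)
          = ∑ b : γ, (r b * Real.negMulLog (P a) + P a * Real.negMulLog (r b)) := by
            refine Finset.sum_congr rfl fun b _ => ?_
            rw [hQr b, Real.negMulLog_mul]
        _ = Real.negMulLog (P a) + P a * ∑ b : γ, Real.negMulLog (r b) := by
            rw [Finset.sum_add_distrib, ← Finset.sum_mul, hr1, one_mul, ← Finset.mul_sum]
        _ ≤ Real.negMulLog (P a) + P a * Real.log (Fintype.card γ) := by
            gcongr
            exact aux_max_ent r hr0 hr1
  calc ent pr (fun ω => (f ω, g ω))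
      = ∑ a : β, ∑ b : γ, Real.negMulLog (Q a b) := by
        unfold ent; rw [Fintype.sum_prod_type]
    _ ≤ ∑ a : β, (Real.negMulLog (P a) + P a * Real.log (Fintype.card γ)) :=
        Finset.sum_le_sum fun a _ => key a
    _ = ent pr f + Real.log (Fintype.card γ) := by
        rw [Finset.sum_add_distrib, ← Finset.sum_mul, hPsum, one_mul]
        rfl

lemma aux_arith (a b c d z eA C F r : ℝ)
    (h1 : a - b = r) (h3 : a ≤ c) (h2 : c - d ≤ F) (h4 : d ≤ z) (h5 : z ≤ eA + C) :
    r ≤ (eA - b) + C + F := by linarith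

lemma aux_arith2 (R2 x s ε n lq : ℝ) (hn : 0 < n) (hlq : 0 < lq)
    (key : n * R2 * lq ≤ x + s * n * lq + n * ε * lq) :
    R2 ≤ 1 / n * (x / lq) + s + ε := by
  have hpos : 0 < n * lq := mul_pos hn hlq
  have h2 : R2 ≤ (x + s * n * lq + n * ε * lq) / (n * lq) := by
    rw [le_div_iff₀ hpos]
    nlinarith [key]
  refine h2.trans (le_of_eq ?_)
  field_simp

end AuxLemmas

set_option maxHeartbeats 2000000

/-- for any code over the combination network, a private receiver `p`
(observing the first `Ep S` of the `E S` edges of each class `S`) that decodes `(W₁,W₂)`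
with Fano error `ε` forces, for every superset-saturated `Λ ⊆ 2^{I₁}`,
`R₂ ≤ (1/n)·H(Xⁿ_Λ | W₁) + Σ_{S∈Λᶜ} |E_{S,p}| + ε`.
Rates and entropies are in units of `log q`; `H(A|W₁) = H(A,W₁) − H(W₁)`. -/
theorem stmt19 {m : ℕ} {Ω : Type} [Fintype Ω]
    (pr : Ω → ℝ) (hpr0 : ∀ ω, 0 ≤ pr ω) (hpr1 : ∑ ω, pr ω = 1)
    (n q M1 M2 : ℕ) (hn : 0 < n) (hq : 1 < q)
    (E Ep : Finset (Fin m) → ℕ) (hEpE : ∀ S, Ep S ≤ E S)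
    (R2 ε : ℝ) (hε : 0 ≤ ε)
    (W1 : Ω → Fin M1) (W2 : Ω → Fin M2)
    (X : (S : Finset (Fin m)) → Ω → (Fin (E S) → Fin n → Fin q))
    -- W₂ independent of W₁, uniform of rate R₂ : H(W₂ | W₁) = n R₂ log q
    (hR2 : ent pr (fun ω => (W1 ω, W2 ω)) - ent pr W1 = n * R2 * Real.log q)
    -- Fano at private receiver p : H(W₂ | W₁, Yⁿ_p) ≤ n ε log q, where
    -- Yⁿ_p = (Xⁿ_{S,p})_S is the private receiver's observation
    (hFano : ent pr (fun ω => (W1 ω, W2 ω,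
          (fun S (k : Fin (Ep S)) => X S ω (Fin.castLE (hEpE S) k) :
            (S : Finset (Fin m)) → Fin (Ep S) → Fin n → Fin q)))
        - ent pr (fun ω => (W1 ω,
          (fun S (k : Fin (Ep S)) => X S ω (Fin.castLE (hEpE S) k) :
            (S : Finset (Fin m)) → Fin (Ep S) → Fin n → Fin q)))
        ≤ n * ε * Real.log q) :
    ∀ Λ : Finset (Finset (Fin m)), Saturated Λ →
      R2 ≤ (1 / n) *
          ((ent pr (fun ω => ((fun S : {S : Finset (Fin m) // S ∈ Λ} => X S.1 ω), W1 ω))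
              - ent pr W1) / Real.log q)
        + (∑ S ∈ Λᶜ, (Ep S : ℝ)) + ε := by
  classical
  intro Λ _
  have hlog : 0 < Real.log q := Real.log_pos (by exact_mod_cast hq)
  have hn' : (0:ℝ) < n := by exact_mod_cast hn
  -- notation
  set Y : Ω → ((S : Finset (Fin m)) → Fin (Ep S) → Fin n → Fin q) :=
    fun ω S k => X S ω (Fin.castLE (hEpE S) k) with hY
  set A : Ω → (((S : {S : Finset (Fin m) // S ∈ Λ}) → Fin (E S.1) → Fin n → Fin q) × Fin M1) :=
    fun ω => ((fun S : {S : Finset (Fin m) // S ∈ Λ} => X S.1 ω), W1 ω) with hA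
  set Yc : Ω → ((S : {S : Finset (Fin m) // S ∈ Λᶜ}) → Fin (Ep S.1) → Fin n → Fin q) :=
    fun ω S k => X S.1 ω (Fin.castLE (hEpE S.1) k) with hYc
  -- Step 1: H(W1,W2) ≤ H(W1,W2,Y)
  have step1 : ent pr (fun ω => (W1 ω, W2 ω)) ≤ ent pr (fun ω => (W1 ω, W2 ω, Y ω)) := by
    exact aux_ent_comp_le pr hpr0 (fun ω => (W1 ω, W2 ω, Y ω))
      (fun t => (t.1, t.2.1)) _ (fun ω => rfl)
  -- Step 2: H(W1, Y) ≤ H(A, Yc) since (W1,Y) is a function of (A, Yc)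
  have step2 : ent pr (fun ω => (W1 ω, Y ω)) ≤ ent pr (fun ω => (A ω, Yc ω)) := by
    refine aux_ent_comp_le pr hpr0 (fun ω => (A ω, Yc ω))
      (fun t => (t.1.2, fun S k =>
        if h : S ∈ Λ then t.1.1 ⟨S, h⟩ (Fin.castLE (hEpE S) k)
        else t.2 ⟨S, Finset.mem_compl.mpr h⟩ k)) _ ?_
    intro ω
    refine Prod.ext rfl ?_
    funext S k
    by_cases h : S ∈ Λ <;> simp [h, hY, hA, hYc]
  -- Step 3: H(A, Yc) ≤ H(A) + log |range Yc|
  have step3 := aux_ent_pair_le pr hpr0 hpr1 A Yc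
  -- Step 4: value of the log-cardinality
  have hcard : Fintype.card ((S : {S : Finset (Fin m) // S ∈ Λᶜ})
      → Fin (Ep S.1) → Fin n → Fin q) = q ^ (∑ S ∈ Λᶜ, Ep S * n) := by
    rw [Fintype.card_pi]
    have h1 : ∀ S : {S : Finset (Fin m) // S ∈ Λᶜ},
        Fintype.card (Fin (Ep S.1) → Fin n → Fin q) = q ^ (Ep S.1 * n) := by
      intro S
      rw [Fintype.card_fun, Fintype.card_fun, Fintype.card_fin, Fintype.card_fin,
        Fintype.card_fin, ← pow_mul, mul_comm]
    rw [Finset.prod_congr rfl fun S _ => h1 S, Finset.prod_pow_eq_pow_sum]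
    congr 1
    exact Finset.sum_coe_sort Λᶜ (fun S => Ep S * n)
  rw [hcard] at step3
  push_cast at step3
  rw [Real.log_pow] at step3
  push_cast at step3
  rw [← Finset.sum_mul] at step3
  -- Assemble the chain
  have hFano' : ent pr (fun ω => (W1 ω, W2 ω, Y ω)) - ent pr (fun ω => (W1 ω, Y ω))
      ≤ ↑n * ε * Real.log ↑q := hFano
  have key := aux_arith _ _ _ _ _ _ _ _ _ hR2 step1 hFano' step2 step3
  exact aux_arith2 R2 _ _ ε _ _ hn' hlog key
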